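/- Let H be a finitely generated submonoid of ℕ^k with H ≠ {0}, and let β(H) = {h_1, h_2, …, h_r} with the h_j distinct. Then ind H equals the rank over ℚ of the k × r matrix M^H whose (i,j)-entry is h_j(i) (i.e., whose columns are h_1,…,h_r). -/

import Mathlib

def coordFn {k : ℕ} (A : Set (Fin k → ℕ)) (i : Fin k) : A → ℚ :=
  fun f => ((f : Fin k → ℕ) i : ℚ)

def IndepOver {k : ℕ} (X : Finset (Fin k)) (A : Set (Fin k → ℕ)) : Prop :=
  LinearIndependent ℚ (fun i : X => coordFn A i.1)

def MaxIndepOver {k : ℕ} (X : Finset (Fin k)) (A : Set (Fin k → ℕ)) : Prop :=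
  IndepOver X A ∧ ∀ Y : Finset (Fin k), X ⊂ Y → ¬ IndepOver Y A

open Pointwise in
def beta {k : ℕ} (H : AddSubmonoid (Fin k → ℕ)) : Set (Fin k → ℕ) :=
  ((H : Set (Fin k → ℕ)) \ {0}) \
    (((H : Set (Fin k → ℕ)) \ {0}) + ((H : Set (Fin k → ℕ)) \ {0}))

def restrictHom {k : ℕ} (X : Finset (Fin k)) : (Fin k → ℕ) →+ (Fin X.card → ℕ) where
  toFun h := fun j => h (X.orderIsoOfFin rfl j).1
  map_zero' := rfl
  map_add' _ _ := rfl

def IsoToSub {k : ℕ} (H : AddSubmonoid (Fin k → ℕ)) (r : ℕ) : Prop :=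
  ∃ K : AddSubmonoid (Fin r → ℕ), Nonempty (H ≃+ K)

noncomputable def indOf {k : ℕ} (H : AddSubmonoid (Fin k → ℕ)) : ℕ :=
  sInf {r : ℕ | 1 ≤ r ∧ IsoToSub H r}


noncomputable section Aux

/-- coordinatewise cast `ℕ^k → ℚ^k` as an `AddMonoidHom`. -/
def natCastHom (k : ℕ) : (Fin k → ℕ) →+ (Fin k → ℚ) where
  toFun f := fun i => (f i : ℚ)
  map_zero' := by funext i; simp
  map_add' a b := by funext i; simp

lemma natCastHom_injective (k : ℕ) : Function.Injective (natCastHom k) := by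
  intro a b hab
  funext i
  have := congrFun hab i
  simpa [natCastHom] using this

open Pointwise in
lemma closure_beta_eq {k : ℕ} (H : AddSubmonoid (Fin k → ℕ)) :
    AddSubmonoid.closure (beta H) = H := by
  apply le_antisymm
  · rw [AddSubmonoid.closure_le]
    intro x hx
    exact hx.1.1
  · intro x hx
    have main : ∀ n : ℕ, ∀ y, y ∈ H → (∑ i, y i) = n →
        y ∈ AddSubmonoid.closure (beta H) := by
      intro n
      induction n using Nat.strong_induction_on with
      | _ n ih =>
        intro y hy hsum
        by_cases hy0 : y = 0
        · subst hy0; exact zero_mem _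
        by_cases hb : y ∈ beta H
        · exact AddSubmonoid.subset_closure hb
        · have hys : y ∈ ((H : Set (Fin k → ℕ)) \ {0}) := ⟨hy, hy0⟩
          have hmem : y ∈ ((H : Set (Fin k → ℕ)) \ {0}) +
              ((H : Set (Fin k → ℕ)) \ {0}) := by
            by_contra hc
            exact hb ⟨hys, hc⟩
          obtain ⟨a, ha, b, hbm, rfl⟩ := hmem
          have hpos : ∀ z : Fin k → ℕ, z ≠ 0 → 0 < ∑ i, z i := by
            intro z hz
            obtain ⟨i, hi⟩ := Function.ne_iff.mp hz
            exact Finset.sum_pos' (fun _ _ => Nat.zero_le _)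
              ⟨i, Finset.mem_univ i, Nat.pos_of_ne_zero hi⟩
          have hsum' : (∑ i, a i) + (∑ i, b i) = n := by
            rw [← hsum, ← Finset.sum_add_distrib]; rfl
          have h1 : (∑ i, a i) < n := by
            have := hpos b hbm.2
            omega
          have h2 : (∑ i, b i) < n := by
            have := hpos a ha.2
            omega
          exact add_mem (ih _ h1 a ha.1 rfl) (ih _ h2 b hbm.1 rfl)
    exact main _ x hx rfl
end Aux

noncomputable section Aux2

lemma indep_iff_nat_rel {m n : ℕ} (v : Fin n → (Fin m → ℕ)) :
    LinearIndependent ℚ (fun j => natCastHom m (v j)) ↔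
      ∀ a b : Fin n → ℕ, (∑ j, a j • v j) = (∑ j, b j • v j) → a = b := by
  constructor
  · intro hli a b hab
    have hc : ∑ j, (((a j : ℚ) - (b j : ℚ)) • natCastHom m (v j)) = 0 := by
      have h1 := congrArg (natCastHom m) hab
      rw [map_sum, map_sum] at h1
      simp only [map_nsmul] at h1
      simp only [sub_smul, Finset.sum_sub_distrib]
      rw [sub_eq_zero]
      simpa [Nat.cast_smul_eq_nsmul] using h1
    have h0 := Fintype.linearIndependent_iff.mp hli _ hc
    funext j
    have := sub_eq_zero.mp (h0 j)
    exact_mod_cast this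
  · intro hrel
    rw [← LinearIndependent.iff_fractionRing ℤ ℚ, Fintype.linearIndependent_iff]
    intro z hz j
    set a : Fin n → ℕ := fun j => (z j).toNat with ha
    set b : Fin n → ℕ := fun j => (-(z j)).toNat with hb
    have hzab : ∀ j, (a j : ℤ) - (b j : ℤ) = z j := fun j => Int.toNat_sub_toNat_neg (z j)
    have hcast : natCastHom m (∑ j, a j • v j) = natCastHom m (∑ j, b j • v j) := by
      rw [map_sum, map_sum]
      simp only [map_nsmul]
      rw [← sub_eq_zero, ← Finset.sum_sub_distrib]
      rw [← hz]
      apply Finset.sum_congr rfl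
      intro j _
      have : z j • natCastHom m (v j) = ((a j : ℤ) - (b j : ℤ)) • natCastHom m (v j) := by
        rw [hzab]
      rw [this, sub_smul]
      simp [natCast_zsmul]
    have hab := hrel a b (natCastHom_injective m hcast)
    have : a j = b j := congrFun hab j
    have := hzab j
    omega
end Aux2

noncomputable section Aux3

lemma coe_sum_nsmul {k n : ℕ} (H : AddSubmonoid (Fin k → ℕ)) (v : Fin n → H)
    (c : Fin n → ℕ) :
    ((∑ j, c j • v j : H) : Fin k → ℕ) = ∑ j, c j • ((v j : Fin k → ℕ)) := by
  push_cast
  rfl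

lemma rel_transfer {k s : ℕ} {H : AddSubmonoid (Fin k → ℕ)} {K : AddSubmonoid (Fin s → ℕ)}
    (φ : H ≃+ K) {n : ℕ} (v : Fin n → H) (a b : Fin n → ℕ) :
    ((∑ j, a j • ((v j : Fin k → ℕ))) = ∑ j, b j • ((v j : Fin k → ℕ))) ↔
      ((∑ j, a j • ((φ (v j) : Fin s → ℕ))) = ∑ j, b j • ((φ (v j) : Fin s → ℕ))) := by
  rw [← coe_sum_nsmul H v a, ← coe_sum_nsmul H v b,
    ← coe_sum_nsmul K (fun j => φ (v j)) a, ← coe_sum_nsmul K (fun j => φ (v j)) b]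
  rw [Subtype.coe_inj, Subtype.coe_inj]
  have key : ∀ (c : Fin n → ℕ), φ (∑ j, c j • v j) = ∑ j, c j • φ (v j) := by
    intro c
    show φ.toAddMonoidHom (∑ j, c j • v j) = _
    rw [map_sum φ.toAddMonoidHom]
    simp only [map_nsmul]
    rfl
  constructor
  · intro hh
    have h2 := congrArg φ hh
    rw [key, key] at h2
    exact h2
  · intro hh
    apply φ.injective
    rw [key, key]
    exact hh

lemma span_cast_H_eq {k r : ℕ} (H : AddSubmonoid (Fin k → ℕ)) (h : Fin r → (Fin k → ℕ))
    (hbeta : beta H = Set.range h) :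
    Submodule.span ℚ (natCastHom k '' (H : Set (Fin k → ℕ))) =
      Submodule.span ℚ (Set.range fun j => natCastHom k (h j)) := by
  have hrange : Set.range (fun j => natCastHom k (h j)) = natCastHom k '' (beta H) := by
    rw [hbeta, ← Set.range_comp]; rfl
  apply le_antisymm
  · rw [Submodule.span_le]
    rintro _ ⟨x, hx, rfl⟩
    have hx' : x ∈ AddSubmonoid.closure (beta H) := by
      rw [closure_beta_eq]; exact hx
    clear hx
    induction hx' using AddSubmonoid.closure_induction with
    | mem y hy =>
      apply Submodule.subset_span
      rw [hrange]
      exact ⟨y, hy, rfl⟩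
    | zero => rw [map_zero]; exact zero_mem _
    | add y z _ _ hy hz => rw [map_add]; exact add_mem hy hz
  · rw [Submodule.span_le]
    rintro _ ⟨j, rfl⟩
    apply Submodule.subset_span
    exact ⟨h j, (by rw [hbeta]; exact ⟨j, rfl⟩ : h j ∈ beta H).1.1, rfl⟩
end Aux3

noncomputable section Aux4
open Submodule Module Matrix

lemma exists_rows {k r : ℕ} (hk : 0 < k) (M : Matrix (Fin k) (Fin r) ℚ) :
    ∃ X : Finset (Fin k), X.card = M.rank ∧
      ∀ i, M i ∈ Submodule.span ℚ (M '' (X : Set (Fin k))) := by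
  classical
  obtain ⟨t, hts, hspan, hli⟩ := exists_linearIndependent ℚ (Set.range M)
  have htfin : t.Finite := (Set.finite_range M).subset hts
  haveI : Fintype t := htfin.fintype
  have hcard : t.toFinset.card = M.rank := by
    rw [M.rank_eq_finrank_span_row, show Set.range M.row = Set.range M from rfl, ← hspan, finrank_span_set_eq_card hli]
  choose g hg using fun (y : t) => (hts y.2 : ∃ i, M i = y.1)
  have ginj : Function.Injective g := by
    intro y1 y2 h12
    apply Subtype.ext
    rw [← hg y1, ← hg y2, h12]
  refine ⟨Finset.image (fun y : t => g y) Finset.univ, ?_, ?_⟩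
  · rw [Finset.card_image_of_injective _ ginj, Finset.card_univ,
      ← Set.toFinset_card, hcard]
  · intro i
    have h1 : M i ∈ Submodule.span ℚ t := by
      rw [hspan]
      exact Submodule.subset_span ⟨i, rfl⟩
    refine Submodule.span_mono ?_ h1
    intro y hy
    refine ⟨g ⟨y, hy⟩, ?_, hg ⟨y, hy⟩⟩
    simp only [Finset.coe_image, Finset.coe_univ, Set.image_univ]
    exact ⟨⟨y, hy⟩, rfl⟩

lemma proj_inj {k r : ℕ} (M : Matrix (Fin k) (Fin r) ℚ) (X : Finset (Fin k))
    (hrows : ∀ i, M i ∈ Submodule.span ℚ (M '' (X : Set (Fin k))))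
    (x y : Fin k → ℚ) (hx : x ∈ LinearMap.range M.mulVecLin)
    (hy : y ∈ LinearMap.range M.mulVecLin)
    (hXeq : ∀ i ∈ X, x i = y i) : x = y := by
  obtain ⟨u, rfl⟩ := hx
  obtain ⟨u', rfl⟩ := hy
  funext i
  let L : (Fin r → ℚ) →ₗ[ℚ] ℚ :=
    { toFun := fun ρ => ρ ⬝ᵥ (u - u')
      map_add' := fun ρ σ => by simp [add_dotProduct]; ring
      map_smul' := fun c ρ => by simp [smul_dotProduct]; ring }
  have hker : M '' (X : Set (Fin k)) ⊆ (LinearMap.ker L : Set (Fin r → ℚ)) := by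
    rintro _ ⟨i', hi', rfl⟩
    have hxy := hXeq i' hi'
    have hmv : ∀ w : Fin r → ℚ, M.mulVecLin w i' = M i' ⬝ᵥ w := fun w => rfl
    show M i' ⬝ᵥ (u - u') = 0
    rw [dotProduct_sub, sub_eq_zero]
    rw [hmv u, hmv u'] at hxy
    exact hxy
  have hle : Submodule.span ℚ (M '' (X : Set (Fin k))) ≤ LinearMap.ker L :=
    Submodule.span_le.mpr hker
  have hLi : L (M i) = 0 := hle (hrows i)
  have : M i ⬝ᵥ (u - u') = 0 := hLi
  rw [dotProduct_sub, sub_eq_zero] at this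
  exact this
end Aux4

open Submodule Module Matrix

theorem statement9 {k r : ℕ} (hk : 0 < k) (H : AddSubmonoid (Fin k → ℕ)) (hH : H ≠ ⊥)
    (hFG : H.FG) (h : Fin r → (Fin k → ℕ)) (hinj : Function.Injective h)
    (hbeta : beta H = Set.range h) :
    indOf H = (Matrix.of fun i j => ((h j i : ℕ) : ℚ) : Matrix (Fin k) (Fin r) ℚ).rank := by
  classical
  set M : Matrix (Fin k) (Fin r) ℚ := Matrix.of fun i j => ((h j i : ℕ) : ℚ) with hM
  set d := M.rank with hd
  have hMT : Set.range Mᵀ = Set.range (fun j => natCastHom k (h j)) := rfl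
  have hspanH : Submodule.span ℚ (natCastHom k '' (H : Set (Fin k → ℕ))) =
      Submodule.span ℚ (Set.range Mᵀ) := by
    rw [span_cast_H_eq H h hbeta, hMT]
  have hdspan : d = finrank ℚ (span ℚ (Set.range Mᵀ)) := M.rank_eq_finrank_span_cols
  -- beta is nonempty
  have hx0 : ∃ x : Fin k → ℕ, x ∈ H ∧ x ≠ 0 := by
    by_contra hc
    push_neg at hc
    exact hH ((AddSubmonoid.eq_bot_iff_forall H).mpr hc)
  obtain ⟨x0, hx0H, hx0ne⟩ := hx0
  have hbne : (beta H).Nonempty := by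
    by_contra hbe
    rw [Set.not_nonempty_iff_eq_empty] at hbe
    have hcl := closure_beta_eq H
    rw [hbe, AddSubmonoid.closure_empty] at hcl
    rw [← hcl] at hx0H
    exact hx0ne hx0H
  obtain ⟨x1, hx1b⟩ := hbne
  have hx1H := hx1b.1.1
  have hx1ne : x1 ≠ 0 := hx1b.1.2
  haveI : FiniteDimensional ℚ (span ℚ (Set.range Mᵀ)) :=
    FiniteDimensional.span_of_finite ℚ (Set.finite_range _)
  have hd1 : 1 ≤ d := by
    have hnz : natCastHom k x1 ≠ 0 := fun h0 => hx1ne (natCastHom_injective k (by rw [h0, map_zero]))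
    have hmem : natCastHom k x1 ∈ span ℚ (Set.range Mᵀ) := by
      rw [← hspanH]
      exact subset_span ⟨x1, hx1H, rfl⟩
    have hnt : Nontrivial (span ℚ (Set.range Mᵀ)) :=
      ⟨⟨⟨_, hmem⟩, 0, fun hc => hnz (by simpa [Subtype.ext_iff] using hc)⟩⟩
    rw [hdspan]
    exact Module.finrank_pos_iff.mpr hnt
  -- Upper bound: d realizes an isomorphism
  obtain ⟨X, hXcard, hXrows⟩ := exists_rows hk M
  have hmemRange : ∀ x : Fin k → ℕ, x ∈ H →
      natCastHom k x ∈ LinearMap.range M.mulVecLin := by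
    intro x hxH
    rw [Matrix.range_mulVecLin, show Set.range M.col = Set.range Mᵀ from rfl, ← hspanH]
    exact subset_span ⟨x, hxH, rfl⟩
  set g : H →+ (Fin X.card → ℕ) := (restrictHom X).comp H.subtype with hg
  have hginj : Function.Injective g := by
    intro x y hxy
    apply Subtype.ext
    apply natCastHom_injective k
    apply proj_inj M X hXrows _ _ (hmemRange _ x.2) (hmemRange _ y.2)
    intro i hi
    have hj := congrFun hxy ((X.orderIsoOfFin rfl).symm ⟨i, hi⟩)
    simp only [hg, AddMonoidHom.comp_apply, AddSubmonoid.coe_subtype, restrictHom,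
      AddMonoidHom.coe_mk, ZeroHom.coe_mk, OrderIso.apply_symm_apply] at hj
    show ((x : Fin k → ℕ) i : ℚ) = ((y : Fin k → ℕ) i : ℚ)
    exact_mod_cast hj
  have hiso : IsoToSub H X.card := by
    refine ⟨AddMonoidHom.mrange g, ⟨AddEquiv.ofBijective g.mrangeRestrict ⟨?_, g.mrangeRestrict_surjective⟩⟩⟩
    intro x y hxy
    apply hginj
    exact Subtype.ext_iff.mp hxy
  have hdS : d ∈ {r' : ℕ | 1 ≤ r' ∧ IsoToSub H r'} := ⟨hd1, by rw [hd, ← hXcard]; exact hiso⟩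
  -- Lower bound
  have hlb : ∀ s' ∈ {r' : ℕ | 1 ≤ r' ∧ IsoToSub H r'}, d ≤ s' := by
    rintro s' ⟨-, K, ⟨φ⟩⟩
    obtain ⟨t, hts, hspan, hli⟩ :=
      exists_linearIndependent ℚ (Set.range (fun j => natCastHom k (h j)))
    have htfin : t.Finite := (Set.finite_range _).subset hts
    haveI : Fintype t := htfin.fintype
    have hcardt : Fintype.card t = d := by
      rw [← Set.toFinset_card, ← finrank_span_set_eq_card hli, hspan, hdspan, hMT]
    let et : Fin d ≃ t := (Fintype.equivFinOfCardEq hcardt).symm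
    choose jdx hjdx using fun (y : t) => (hts y.2 : ∃ j, natCastHom k (h j) = y.1)
    set v : Fin d → (Fin k → ℕ) := fun i => h (jdx (et i)) with hv
    have hvH : ∀ i, v i ∈ H := by
      intro i
      have : h (jdx (et i)) ∈ beta H := by rw [hbeta]; exact ⟨_, rfl⟩
      exact this.1.1
    have hvcast : (fun i => natCastHom k (v i)) = (fun i : Fin d => ((et i : Set.Elem t) : Fin k → ℚ)) := by
      funext i
      exact hjdx (et i)
    have hliv : LinearIndependent ℚ (fun i => natCastHom k (v i)) := by
      rw [hvcast]
      exact hli.comp et et.injective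
    have hrel := (indep_iff_nat_rel v).mp hliv
    set V : Fin d → H := fun i => ⟨v i, hvH i⟩ with hV
    set w : Fin d → (Fin s' → ℕ) := fun i => (φ (V i) : Fin s' → ℕ) with hw
    have hrelw : ∀ a b : Fin d → ℕ, (∑ j, a j • w j) = ∑ j, b j • w j → a = b := by
      intro a b hab
      exact hrel a b ((rel_transfer φ V a b).mpr hab)
    have hliw : LinearIndependent ℚ (fun i => natCastHom s' (w i)) :=
      (indep_iff_nat_rel w).mpr hrelw
    have hle := hliw.fintype_card_le_finrank
    simpa [Module.finrank_fintype_fun_eq_card] using hle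
  have hSne : {r' : ℕ | 1 ≤ r' ∧ IsoToSub H r'}.Nonempty := ⟨d, hdS⟩
  exact le_antisymm (Nat.sInf_le hdS) (hlb _ (Nat.sInf_mem hSne))
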